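/- Let n ≥ 2 be an integer and let f be a continuous, not identically zero, positive definite function on ℝ that is n-divisible. Assume that the essential support S_f = {x ∈ ℝ : f(x) ≠ 0} has exactly 2k−1 connected components for some positive integer k. Then the set D_n(f) = {g : g is continuous, not identically zero, positive definite on ℝ и g(x)^n = f(x) for all x ∈ ℝ} has cardinality at most n^(k−1). -/

import Mathlib

open Complex MeasureTheory Set Pointwise ComplexOrder

noncomputable section

/-- `f : ℝ → ℂ` is positive definite. -/
def IsPosDefFn (f : ℝ → ℂ) : Prop :=
  ∀ (m : ℕ) (x : Fin m → ℝ) (c : Fin m → ℂ),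
    0 ≤ ∑ j, ∑ k, f (x j - x k) * c j * (starRingEnd ℂ) (c k)

/-- `f ∈ PD(ℝ)`: continuous, not identically zero, positive definite. -/
def MemPD (f : ℝ → ℂ) : Prop :=
  Continuous f ∧ (∃ x, f x ≠ 0) ∧ IsPosDefFn f

/-- The essential support `S_f`. -/
def essSupp (f : ℝ → ℂ) : Set ℝ := {x | f x ≠ 0}

/-- `D_n(f) = {g ∈ PD(ℝ) : g^n = f}`. -/
def Dset (n : ℕ) (f : ℝ → ℂ) : Set (ℝ → ℂ) :=
  {g | MemPD g ∧ ∀ x, g x ^ n = f x}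

/-- The set of connected components of `S ⊆ ℝ`. -/
def comps (S : Set ℝ) : Set (Set ℝ) :=
  {C | ∃ x ∈ S, C = connectedComponentIn S x}

lemma pd_zero_nonneg {f : ℝ → ℂ} (hf : IsPosDefFn f) : 0 ≤ f 0 := by
  have := hf 1 (fun _ => 0) (fun _ => 1)
  simpa using this

lemma pd_conj {f : ℝ → ℂ} (hf : IsPosDefFn f) (x : ℝ) :
    f (-x) = (starRingEnd ℂ) (f x) := by
  have h0 : (f 0).im = 0 := ((Complex.nonneg_iff.mp (pd_zero_nonneg hf)).2).symm
  have h1 := hf 2 ![x, 0] ![1, 1]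
  have h2 := hf 2 ![x, 0] ![1, Complex.I]
  simp [Fin.sum_univ_two, Complex.nonneg_iff] at h1 h2
  apply Complex.ext <;> simp [Complex.conj_re, Complex.conj_im] <;> linarith [h1.2, h2.2]

lemma pd_abs_le {f : ℝ → ℂ} (hf : IsPosDefFn f) (x : ℝ) :
    ‖f x‖ ≤ (f 0).re := by
  have h0 := Complex.nonneg_iff.mp (pd_zero_nonneg hf)
  rcases eq_or_ne (f x) 0 with h | h
  · simpa [h] using h0.1
  have hc := pd_conj hf x
  have key := hf 2 ![x, 0] ![(starRingEnd ℂ) (f x), -(‖f x‖ : ℂ)]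
  simp only [Fin.sum_univ_two, Matrix.cons_val_zero, Matrix.cons_val_one, Matrix.head_cons,
    sub_self, sub_zero, zero_sub, map_neg, map_mul, Complex.conj_conj, Complex.conj_ofReal,
    hc] at key
  set a := f x with ha
  set r : ℝ := ‖a‖ with hrdef
  have h1 : a * (starRingEnd ℂ) a = (r:ℂ)^2 := by
    rw [Complex.mul_conj, Complex.normSq_eq_norm_sq]; push_cast; rfl
  have e : f 0 * (starRingEnd ℂ) a * a + a * (starRingEnd ℂ) a * -(r:ℂ) +
        ((starRingEnd ℂ) a * -(r:ℂ) * a + f 0 * -(r:ℂ) * -(r:ℂ)) =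
        2*(r:ℂ)^2 * f 0 - 2*(r:ℂ)^3 := by
    linear_combination (f 0 - 2*(r:ℂ)) * h1
  rw [e] at key
  rw [Complex.nonneg_iff] at key
  have hre := key.1
  simp only [← Complex.ofReal_pow, Complex.sub_re, Complex.mul_re, Complex.mul_im,
    Complex.ofReal_re, Complex.ofReal_im, Complex.re_ofNat, Complex.im_ofNat] at hre
  have hrpos : 0 < r := norm_pos_iff.mpr h
  ring_nf at hre
  nlinarith [hre, hrpos, mul_pos hrpos hrpos]

lemma memPD_zero_pos {f : ℝ → ℂ} (hf : MemPD f) : f 0 ≠ 0 := by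
  obtain ⟨x0, hx0⟩ := hf.2.1
  have h1 : 0 < ‖f x0‖ := norm_pos_iff.mpr hx0
  have h2 := pd_abs_le hf.2.2 x0
  have h3 := Complex.nonneg_iff.mp (pd_zero_nonneg hf.2.2)
  intro h
  rw [h] at h2; simp only [Complex.zero_re] at h2; linarith

lemma mem_essSupp_iff {n : ℕ} {f g : ℝ → ℂ} (hn : 2 ≤ n) (hg : g ∈ Dset n f) (x : ℝ) :
    g x ≠ 0 ↔ x ∈ essSupp f := by
  rw [essSupp, mem_setOf_eq, ← hg.2 x]
  simp [pow_eq_zero_iff (show n ≠ 0 by omega)]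

lemma nthroots_finite (n : ℕ) (hn : 2 ≤ n) : {z : ℂ | z ^ n = 1}.Finite := by
  apply Set.Finite.subset (Multiset.toFinset (Polynomial.nthRoots n (1:ℂ))).finite_toSet
  intro z hz
  simp only [Finset.coe_sort_coe, Finset.mem_coe, Multiset.mem_toFinset]
  rw [Polynomial.mem_nthRoots (show 0 < n by omega)]
  exact hz

lemma eq_on_component {n : ℕ} (hn : 2 ≤ n) {f g g' : ℝ → ℂ}
    (hg : g ∈ Dset n f) (hg' : g' ∈ Dset n f) {x y : ℝ}
    (hx : x ∈ essSupp f) (hy : y ∈ connectedComponentIn (essSupp f) x)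
    (hxy : g x = g' x) : g y = g' y := by
  set S := essSupp f with hSdef
  set C := connectedComponentIn S x with hCdef
  have hCS : C ⊆ S := connectedComponentIn_subset S x
  have hne : ∀ t ∈ C, g' t ≠ 0 := fun t ht => (mem_essSupp_iff hn hg' t).mpr (hCS ht)
  have hcont : ContinuousOn (fun t => g t / g' t) C :=
    (hg.1.1.continuousOn.div hg'.1.1.continuousOn hne)
  have hpre : IsPreconnected ((fun t => g t / g' t) '' C) :=
    isPreconnected_connectedComponentIn.image _ hcont
  have hfin : ((fun t => g t / g' t) '' C).Finite := by
    apply (nthroots_finite n hn).subset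
    rintro - ⟨t, ht, rfl⟩
    have hft : f t ≠ 0 := hCS ht
    simp only [mem_setOf_eq, div_pow, hg.2 t, hg'.2 t, div_self hft]
  have hsub : ((fun t => g t / g' t) '' C).Subsingleton := by
    by_contra hns
    rw [Set.not_subsingleton_iff] at hns
    exact (hpre.infinite_of_nontrivial hns) hfin
  have hxC : x ∈ C := mem_connectedComponentIn hx
  have heq : g y / g' y = g x / g' x := hsub (mem_image_of_mem _ hy) (mem_image_of_mem _ hxC)
  rw [hxy, div_self (hne x hxC)] at heq
  exact (div_eq_one_iff_eq (hne y hy)).mp heq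

lemma g_zero_eq {n : ℕ} {f g g' : ℝ → ℂ} (hn : 2 ≤ n) (hf : MemPD f)
    (hg : g ∈ Dset n f) (hg' : g' ∈ Dset n f) : g 0 = g' 0 := by
  have hf0 : f 0 ≠ 0 := memPD_zero_pos hf
  have h1 := Complex.nonneg_iff.mp (pd_zero_nonneg hg.1.2.2)
  have h2 := Complex.nonneg_iff.mp (pd_zero_nonneg hg'.1.2.2)
  have e1 : g 0 = ((g 0).re : ℂ) := by
    apply Complex.ext <;> simp [← h1.2]
  have e2 : g' 0 = ((g' 0).re : ℂ) := by
    apply Complex.ext <;> simp [← h2.2]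
  have hp : ((g 0).re) ^ n = ((g' 0).re) ^ n := by
    have := (hg.2 0).trans (hg'.2 0).symm
    rw [e1, e2] at this
    exact_mod_cast this
  rw [e1, e2]
  norm_cast
  exact (pow_left_strictMonoOn₀ (show n ≠ 0 by omega)).injOn h1.1 h2.1 hp
theorem card_Dset_le_of_odd_components (n k : ℕ) (hn : 2 ≤ n) (hk : 0 < k)
    (f : ℝ → ℂ) (hf : MemPD f) (hdiv : (Dset n f).Nonempty)
    (hcomp : (comps (essSupp f)).ncard = 2 * k - 1) :
    (Dset n f).Finite ∧ (Dset n f).ncard ≤ n ^ (k - 1) := by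
  classical
  obtain ⟨g₀, hg₀⟩ := hdiv
  set S := essSupp f with hSdef
  have hf0 : f 0 ≠ 0 := memPD_zero_pos hf
  have hS0 : (0:ℝ) ∈ S := hf0
  have hsym : ∀ x : ℝ, x ∈ S → -x ∈ S := by
    intro x hx
    have := pd_conj hf.2.2 x
    simp only [hSdef, essSupp, mem_setOf_eq] at hx ⊢
    rw [this]
    simpa using hx
  have hnegS : Neg.neg '' S = S := by
    apply Set.Subset.antisymm
    · rintro - ⟨t, ht, rfl⟩; exact hsym t ht
    · intro t ht; exact ⟨-t, hsym t ht, neg_neg t⟩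
  have hnegC : ∀ x ∈ S, Neg.neg '' connectedComponentIn S x = connectedComponentIn S (-x) := by
    intro x hx
    have h := (Homeomorph.neg ℝ).image_connectedComponentIn (s := S) (x := x) hx
    simpa [hnegS] using h
  -- trichotomy
  have htri : ∀ x ∈ S, (0:ℝ) ∈ connectedComponentIn S x ∨
      connectedComponentIn S x ⊆ Ioi 0 ∨ connectedComponentIn S x ⊆ Iio 0 := by
    intro x hx
    by_cases h0 : (0:ℝ) ∈ connectedComponentIn S x
    · exact Or.inl h0
    refine Or.inr ?_
    have hord : OrdConnected (connectedComponentIn S x) :=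
      isPreconnected_connectedComponentIn.ordConnected
    by_cases hpos : ∀ t ∈ connectedComponentIn S x, 0 < t
    · exact Or.inl fun t ht => hpos t ht
    · refine Or.inr fun t ht => ?_
      push_neg at hpos
      obtain ⟨a, ha, ha0⟩ := hpos
      have halt : a < 0 := lt_of_le_of_ne ha0 (fun h => h0 (h ▸ ha))
      by_contra hts
      have ht0 : 0 ≤ t := not_lt.mp hts
      exact h0 (hord.out ha ht ⟨halt.le, ht0⟩)
  set C₀ := connectedComponentIn S 0 with hC0def
  set P := {C ∈ comps S | C ⊆ Ioi 0} with hPdef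
  set N := {C ∈ comps S | C ⊆ Iio 0} with hNdef
  have hfin : (comps S).Finite := by
    by_contra h
    have : (comps S).ncard = 0 := Set.Infinite.ncard h
    omega
  have hdecomp : comps S = insert C₀ (P ∪ N) := by
    ext C
    constructor
    · rintro ⟨x, hx, rfl⟩
      rcases htri x hx with h | h | h
      · exact Or.inl (connectedComponentIn_eq h)
      · exact Or.inr (Or.inl ⟨⟨x, hx, rfl⟩, h⟩)
      · exact Or.inr (Or.inr ⟨⟨x, hx, rfl⟩, h⟩)
    · rintro (rfl | h | h)
      · exact ⟨0, hS0, rfl⟩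
      · exact h.1
      · exact h.1
  have hC0notPN : C₀ ∉ P ∪ N := by
    rintro (h | h)
    · exact absurd (h.2 (mem_connectedComponentIn hS0)) (by simp)
    · exact absurd (h.2 (mem_connectedComponentIn hS0)) (by simp)
  have hPN : Disjoint P N := by
    rw [Set.disjoint_left]
    rintro C ⟨⟨x, hx, rfl⟩, hC⟩ ⟨-, hC'⟩
    have hxC : x ∈ connectedComponentIn S x := mem_connectedComponentIn hx
    exact absurd (hC' hxC) (show ¬ x < 0 from not_lt.mpr (Set.mem_Ioi.mp (hC hxC)).le)
  have hPfin : P.Finite := hfin.subset (sep_subset _ _)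
  have hNfin : N.Finite := hfin.subset (sep_subset _ _)
  -- N is the image of P under negation
  set m : Set ℝ → Set ℝ := fun C => Neg.neg '' C with hmdef
  have hmm : Function.Involutive m := by
    intro C; simp [hmdef, Set.image_image]
  have hNP : N = m '' P := by
    apply Set.Subset.antisymm
    · rintro C ⟨⟨x, hx, rfl⟩, hC⟩
      refine ⟨m (connectedComponentIn S x), ⟨⟨-x, hsym x hx, (hnegC x hx)⟩, ?_⟩,
        hmm (connectedComponentIn S x)⟩
      rw [hmdef]
      rintro - ⟨t, ht, rfl⟩
      simpa using hC ht
    · rintro - ⟨C, ⟨⟨x, hx, rfl⟩, hC⟩, rfl⟩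
      refine ⟨⟨-x, hsym x hx, by rw [hmdef]; exact hnegC x hx⟩, ?_⟩
      rw [hmdef]
      rintro - ⟨t, ht, rfl⟩
      simpa using hC ht
  have hNcard : N.ncard = P.ncard := by
    rw [hNP]
    exact Set.ncard_image_of_injective P hmm.injective
  have hPcard : P.ncard = k - 1 := by
    have h1 : (comps S).ncard = 1 + (P ∪ N).ncard := by
      rw [hdecomp, Set.ncard_insert_of_notMem hC0notPN (hPfin.union hNfin)]
      omega
    have h2 : (P ∪ N).ncard = P.ncard + N.ncard :=
      Set.ncard_union_eq hPN hPfin hNfin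
    omega
  -- choose a point in each component of P
  have hPpt : ∀ C : ↥P, ∃ t : ℝ, t ∈ S ∧ t ∈ (C : Set ℝ) ∧ (C : Set ℝ) = connectedComponentIn S t := by
    rintro ⟨C, ⟨x, hx, rfl⟩, -⟩
    exact ⟨x, hx, mem_connectedComponentIn hx, rfl⟩
  choose pt hptS hptC hptEq using hPpt
  set R := {z : ℂ | z ^ n = 1} with hRdef
  have hRfin : R.Finite := nthroots_finite n hn
  have hΦmem : ∀ (g : ↥(Dset n f)) (C : ↥P), (g : ℝ → ℂ) (pt C) / g₀ (pt C) ∈ R := by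
    intro g C
    have hfpt : f (pt C) ≠ 0 := hptS C
    simp only [hRdef, mem_setOf_eq, div_pow, (g.2).2 (pt C), hg₀.2 (pt C), div_self hfpt]
  set Φ : ↥(Dset n f) → (↥P → ↥R) := fun g C => ⟨_, hΦmem g C⟩ with hΦdef
  have hΦinj : Function.Injective Φ := by
    intro g g' hgg'
    have hkey : ∀ C : ↥P, (g : ℝ → ℂ) (pt C) = (g' : ℝ → ℂ) (pt C) := by
      intro C
      have h1 : (g : ℝ → ℂ) (pt C) / g₀ (pt C) = (g' : ℝ → ℂ) (pt C) / g₀ (pt C) := by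
        have h2 := congrFun hgg' C
        simpa [hΦdef, Subtype.ext_iff] using h2
      have hg₀ne : g₀ (pt C) ≠ 0 := (mem_essSupp_iff hn hg₀ _).mpr (hptS C)
      exact (div_left_inj' hg₀ne).mp h1
    apply Subtype.ext
    funext x
    by_cases hx : x ∈ S
    · rcases htri x hx with h | h | h
      · have hxc : x ∈ connectedComponentIn S 0 := by
          rw [← connectedComponentIn_eq h]
          exact mem_connectedComponentIn hx
        exact eq_on_component hn g.2 g'.2 hS0 hxc (g_zero_eq hn hf g.2 g'.2)
      · have hCP : connectedComponentIn S x ∈ P := ⟨⟨x, hx, rfl⟩, h⟩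
        have hxC : x ∈ connectedComponentIn S (pt ⟨_, hCP⟩) := by
          rw [← hptEq ⟨_, hCP⟩]; exact mem_connectedComponentIn hx
        exact eq_on_component hn g.2 g'.2 (hptS ⟨_, hCP⟩) hxC (hkey ⟨_, hCP⟩)
      · have hxS' : -x ∈ S := hsym x hx
        have hCP : connectedComponentIn S (-x) ∈ P := by
          refine ⟨⟨-x, hxS', rfl⟩, ?_⟩
          rw [← hnegC x hx]
          rintro - ⟨t, ht, rfl⟩
          simpa using h ht
        have hxC : -x ∈ connectedComponentIn S (pt ⟨_, hCP⟩) := by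
          rw [← hptEq ⟨_, hCP⟩]; exact mem_connectedComponentIn hxS'
        have hneg : (g : ℝ → ℂ) (-x) = (g' : ℝ → ℂ) (-x) :=
          eq_on_component hn g.2 g'.2 (hptS ⟨_, hCP⟩) hxC (hkey ⟨_, hCP⟩)
        have e1 := pd_conj (g.2).1.2.2 x
        have e2 := pd_conj (g'.2).1.2.2 x
        rw [e1, e2] at hneg
        exact star_injective hneg
    · have h1 : (g : ℝ → ℂ) x = 0 := by
        by_contra h
        exact hx ((mem_essSupp_iff hn g.2 x).mp h)
      have h2 : (g' : ℝ → ℂ) x = 0 := by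
        by_contra h
        exact hx ((mem_essSupp_iff hn g'.2 x).mp h)
      rw [h1, h2]
  have hPsub : Finite ↥P := hPfin.to_subtype
  have hRsub : Finite ↥R := hRfin.to_subtype
  have hDfin : (Dset n f).Finite := Set.finite_coe_iff.mp (Finite.of_injective Φ hΦinj)
  refine ⟨hDfin, ?_⟩
  have h1 : Nat.card ↥(Dset n f) ≤ Nat.card (↥P → ↥R) := Nat.card_le_card_of_injective Φ hΦinj
  rw [Nat.card_fun] at h1
  have hR : Nat.card ↥R ≤ n := by
    rw [Nat.card_coe_set_eq]
    have hsub : R ⊆ ↑(Polynomial.nthRoots n (1:ℂ)).toFinset := by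
      intro z hz
      simp only [Finset.mem_coe, Multiset.mem_toFinset]
      rw [Polynomial.mem_nthRoots (show 0 < n by omega)]
      exact hz
    calc R.ncard ≤ ((Polynomial.nthRoots n (1:ℂ)).toFinset : Finset ℂ).card := by
          rw [← Set.ncard_coe_finset]
          exact Set.ncard_le_ncard hsub (Finset.finite_toSet _)
      _ ≤ Multiset.card (Polynomial.nthRoots n (1:ℂ)) := Multiset.toFinset_card_le _
      _ ≤ n := Polynomial.card_nthRoots n 1
  have hP : Nat.card ↥P = k - 1 := by rw [Nat.card_coe_set_eq, hPcard]
  rw [← Nat.card_coe_set_eq]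
  calc Nat.card ↥(Dset n f) ≤ Nat.card ↥R ^ Nat.card ↥P := h1
    _ ≤ n ^ (k-1) := by rw [hP]; exact Nat.pow_le_pow_left hR _
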